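/- For all integers R_A ≥ 2 and R_D ≥ 2, the Attacker-Defender game with endowments R_A and R_D has exactly one mixed-strategy Nash equilibrium (a*, d*), given by: a*_0 = (R_D−l*)/R_D, a*_i = (R_D−l*)/((R_D−i+1)(R_D−i)) for 1 ≤ i ≤ l*, a*_i = 0 for l* < i ≤ R_A; and d*_j = 1/(R_D−j) for 0 ≤ j < l*, d*_{l*} = 1 − Σ_{j=0}^{l*−1} 1/(R_D−j), d*_j = 0 for l* < j ≤ R_D; where l* = min(R_A, k*) and k* is the unique integer with 1 ≤ k* ≤ R_D−1 satisfying H_{R_D} − H_{R_D−k*} < 1 < H_{R_D} − H_{R_D−k*−1}. -/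

import Mathlib

/-- Attacker's payoff: `R_A - i + R_D - j` if `i > j`, else `R_A - i`. -/
noncomputable def piA (RA RD i j : ℕ) : ℝ :=
  if j < i then (RA : ℝ) - i + ((RD : ℝ) - j) else (RA : ℝ) - i

/-- Defender's payoff: `0` if `i > j`, else `R_D - j`. -/
noncomputable def piD (RD i j : ℕ) : ℝ :=
  if j < i then 0 else (RD : ℝ) - j

/-- A mixed strategy over the investments `{0, 1, ..., R}`. -/
def IsMixed (R : ℕ) (s : ℕ → ℝ) : Prop :=
  (∀ i, 0 ≤ s i) ∧ (∀ i, R < i → s i = 0) ∧ ∑ i ∈ Finset.range (R + 1), s i = 1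

/-- Attacker's expected payoff under mixed strategies. -/
noncomputable def PayA (RA RD : ℕ) (a d : ℕ → ℝ) : ℝ :=
  ∑ i ∈ Finset.range (RA + 1), ∑ j ∈ Finset.range (RD + 1), a i * d j * piA RA RD i j

/-- Defender's expected payoff under mixed strategies. -/
noncomputable def PayD (RA RD : ℕ) (a d : ℕ → ℝ) : ℝ :=
  ∑ i ∈ Finset.range (RA + 1), ∑ j ∈ Finset.range (RD + 1), a i * d j * piD RD i j

/-- Mixed-strategy Nash equilibrium of the A-D game with endowments `RA`, `RD`. -/
def IsNash (RA RD : ℕ) (a d : ℕ → ℝ) : Prop :=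
  IsMixed RA a ∧ IsMixed RD d ∧
  (∀ a', IsMixed RA a' → PayA RA RD a' d ≤ PayA RA RD a d) ∧
  (∀ d', IsMixed RD d' → PayD RA RD a d' ≤ PayD RA RD a d)

/-- The `n`-th harmonic number `H_n = 1 + 1/2 + ... + 1/n` (with `H_0 = 0`). -/
noncomputable def H (n : ℕ) : ℝ := ∑ k ∈ Finset.Icc 1 n, (1 : ℝ) / k

/-- `l` is the upper bound `l*` for endowment `R`:
the unique `1 ≤ l ≤ R - 1` with `H_R - H_{R-l} < 1 < H_R - H_{R-l-1}`. -/
def IsUpperBound (R l : ℕ) : Prop :=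
  1 ≤ l ∧ l ≤ R - 1 ∧ H R - H (R - l) < 1 ∧ 1 < H R - H (R - l - 1)

/-- Attacker's equilibrium mixed strategy (defender endowment `R`, upper bound `l`). -/
noncomputable def astar (R l : ℕ) : ℕ → ℝ := fun i =>
  if i = 0 then ((R : ℝ) - l) / R
  else if i ≤ l then ((R : ℝ) - l) / (((R : ℝ) - i + 1) * ((R : ℝ) - i))
  else 0

/-- Defender's equilibrium mixed strategy (defender endowment `R`, upper bound `l`). -/
noncomputable def dstar (R l : ℕ) : ℕ → ℝ := fun j =>
  if j < l then 1 / ((R : ℝ) - j)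
  else if j = l then 1 - ∑ k ∈ Finset.range l, 1 / ((R : ℝ) - k)
  else 0

open Finset in
/-- cut an ite sum -/
lemma sum_ite_cut (N m : ℕ) (f : ℕ → ℝ) (hf : ∀ j, N < j → f j = 0) :
    ∑ j ∈ Finset.range (N + 1), (if j < m then f j else 0) = ∑ j ∈ Finset.range m, f j := by
  have h1 : ∑ j ∈ Finset.range (N + 1), (if j < m then f j else 0)
      = ∑ j ∈ Finset.range (max (N+1) m), (if j < m then f j else 0) := by
    apply Finset.sum_subset (Finset.range_subset_range.2 (le_max_left _ _))
    intro x hx hx'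
    simp only [Finset.mem_range, not_lt] at hx'
    by_cases h : x < m
    · simp [h, hf x (by omega)]
    · simp [h]
  have h2 : ∑ j ∈ Finset.range m, f j
      = ∑ j ∈ Finset.range (max (N+1) m), (if j < m then f j else 0) := by
    rw [Finset.sum_congr rfl (g := fun j => if j < m then f j else 0)
      (fun x hx => by simp [Finset.mem_range.1 hx])]
    apply Finset.sum_subset (Finset.range_subset_range.2 (le_max_right _ _))
    intro x hx hx'
    simp only [Finset.mem_range, not_lt] at hx'
    simp [Nat.not_lt.2 hx']
  rw [h1, ← h2]
/-- harmonic recursion -/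
lemma H_succ (n : ℕ) : H (n + 1) = H n + 1 / ((n : ℝ) + 1) := by
  unfold H
  rw [Finset.sum_Icc_succ_top (by omega)]
  push_cast; ring

lemma H_mono : Monotone H := by
  intro m n h
  unfold H
  apply Finset.sum_le_sum_of_subset_of_nonneg
  · exact Finset.Icc_subset_Icc le_rfl h
  · intro i _ _; positivity

/-- partial sums of 1/(R-j) are harmonic differences -/
lemma hsum (R : ℕ) : ∀ m, m ≤ R → ∑ j ∈ Finset.range m, (1:ℝ) / ((R:ℝ) - j) = H R - H (R - m) := by
  intro m
  induction m with
  | zero => simp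
  | succ n ih =>
    intro h
    rw [Finset.sum_range_succ, ih (by omega)]
    have h1 : R - n = (R - (n+1)) + 1 := by omega
    rw [h1, H_succ]
    have h2 : ((R - (n+1) : ℕ) : ℝ) = (R : ℝ) - (n+1) := by
      have : ((n:ℝ)+1) ≤ R := by exact_mod_cast h
      rw [Nat.cast_sub h]; push_cast; ring
    rw [h2]
    push_cast; ring_nf

lemma mixed_partial_nonneg {R : ℕ} {s : ℕ → ℝ} (hs : IsMixed R s) (m : ℕ) :
    0 ≤ ∑ j ∈ Finset.range m, s j :=
  Finset.sum_nonneg fun j _ => hs.1 j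

lemma mixed_partial_le {R : ℕ} {s : ℕ → ℝ} (hs : IsMixed R s) (m : ℕ) :
    ∑ j ∈ Finset.range m, s j ≤ 1 := by
  obtain ⟨h0, h1, h2⟩ := hs
  have key : ∑ j ∈ Finset.range m, s j ≤ ∑ j ∈ Finset.range (max m (R+1)), s j := by
    apply Finset.sum_le_sum_of_subset_of_nonneg (Finset.range_subset_range.2 (le_max_left _ _))
    intro i _ _; exact h0 i
  have : ∑ j ∈ Finset.range (max m (R+1)), s j = 1 := by
    rw [← h2]
    symm
    apply Finset.sum_subset (Finset.range_subset_range.2 (le_max_right _ _))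
    intro x _ hx'
    exact h1 x (by simp only [Finset.mem_range, not_lt] at hx'; omega)
  linarith [key, this]

/-- the pure strategy δ_i -/
noncomputable def delta (i : ℕ) : ℕ → ℝ := fun m => if m = i then 1 else 0

lemma delta_mixed {R i : ℕ} (h : i ≤ R) : IsMixed R (delta i) := by
  refine ⟨fun m => by unfold delta; split <;> norm_num,
    fun m hm => by unfold delta; split <;> [omega; rfl], ?_⟩
  unfold delta
  rw [Finset.sum_ite_eq' (Finset.range (R+1)) i (fun _ => (1:ℝ))]
  simp [Nat.lt_succ_of_le h]

lemma sum_delta_mul (R i : ℕ) (h : i ≤ R) (p : ℕ → ℝ) :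
    ∑ m ∈ Finset.range (R + 1), delta i m * p m = p i := by
  unfold delta
  simp only [ite_mul, one_mul, zero_mul]
  rw [Finset.sum_ite_eq' (Finset.range (R+1)) i p]
  simp [Nat.lt_succ_of_le h]
/-- cumulative defender "hazard" -/
noncomputable def Cc (RD : ℕ) (d : ℕ → ℝ) (m : ℕ) : ℝ :=
  ∑ j ∈ Finset.range m, d j * ((RD : ℝ) - j)

/-- attacker's pure payoff against mixed d -/
noncomputable def Uu (RA RD : ℕ) (d : ℕ → ℝ) (i : ℕ) : ℝ := (RA : ℝ) - i + Cc RD d i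

/-- cumulative attacker mass -/
noncomputable def Aa (a : ℕ → ℝ) (j : ℕ) : ℝ := ∑ i ∈ Finset.range (j + 1), a i

/-- defender's pure payoff against mixed a -/
noncomputable def Vv (RD : ℕ) (a : ℕ → ℝ) (j : ℕ) : ℝ := ((RD : ℝ) - j) * Aa a j

lemma payA_decomp (RA RD : ℕ) (a d : ℕ → ℝ) (hd : IsMixed RD d) :
    PayA RA RD a d = ∑ i ∈ Finset.range (RA + 1), a i * Uu RA RD d i := by
  unfold PayA Uu Cc
  apply Finset.sum_congr rfl
  intro i _
  have hpi : ∀ j, piA RA RD i j = ((RA:ℝ) - i) + (if j < i then ((RD:ℝ) - j) else 0) := by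
    intro j; unfold piA; split <;> simp
  calc ∑ j ∈ Finset.range (RD+1), a i * d j * piA RA RD i j
      = a i * ∑ j ∈ Finset.range (RD+1), (d j * ((RA:ℝ) - i)
          + (if j < i then d j * ((RD:ℝ) - j) else 0)) := by
        rw [Finset.mul_sum]
        apply Finset.sum_congr rfl
        intro j _
        rw [hpi j]
        split <;> ring
    _ = a i * ((∑ j ∈ Finset.range (RD+1), d j) * ((RA:ℝ) - i)
          + ∑ j ∈ Finset.range (RD+1), (if j < i then d j * ((RD:ℝ) - j) else 0)) := by
        rw [Finset.sum_add_distrib, Finset.sum_mul]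
    _ = a i * (((RA:ℝ) - i) + ∑ j ∈ Finset.range i, d j * ((RD:ℝ) - j)) := by
        rw [hd.2.2, one_mul, sum_ite_cut RD i _ (fun j hj => by rw [hd.2.1 j hj]; ring)]
  
lemma payD_decomp (RA RD : ℕ) (a d : ℕ → ℝ) (ha : IsMixed RA a) :
    PayD RA RD a d = ∑ j ∈ Finset.range (RD + 1), d j * Vv RD a j := by
  unfold PayD Vv Aa
  rw [Finset.sum_comm]
  apply Finset.sum_congr rfl
  intro j _
  have hpi : ∀ i, piD RD i j = ((RD:ℝ) - j) * (if i < j + 1 then 1 else 0) := by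
    intro i; unfold piD
    rcases lt_or_ge j i with h | h
    · rw [if_pos h, if_neg (by omega)]; ring
    · rw [if_neg (by omega), if_pos (by omega)]; ring
  calc ∑ i ∈ Finset.range (RA+1), a i * d j * piD RD i j
      = d j * (((RD:ℝ) - j) * ∑ i ∈ Finset.range (RA+1), (if i < j + 1 then a i else 0)) := by
        rw [Finset.mul_sum, Finset.mul_sum]
        apply Finset.sum_congr rfl
        intro i _
        rw [hpi i]
        split <;> ring
    _ = d j * (((RD:ℝ) - j) * ∑ i ∈ Finset.range (j+1), a i) := by
        rw [sum_ite_cut RA (j+1) _ (fun i hi => ha.2.1 i hi)]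
section NashFacts
variable {RA RD : ℕ} {a d : ℕ → ℝ}

lemma nash_U_le (hN : IsNash RA RD a d) : ∀ i ≤ RA, Uu RA RD d i ≤ PayA RA RD a d := by
  intro i hi
  have := hN.2.2.1 (delta i) (delta_mixed hi)
  rwa [payA_decomp RA RD (delta i) d hN.2.1, sum_delta_mul RA i hi] at this

lemma nash_payA_eq (hN : IsNash RA RD a d) :
    PayA RA RD a d = ∑ i ∈ Finset.range (RA + 1), a i * Uu RA RD d i :=
  payA_decomp RA RD a d hN.2.1

lemma nash_U_supp (hN : IsNash RA RD a d) :
    ∀ i ≤ RA, a i ≠ 0 → Uu RA RD d i = PayA RA RD a d := by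
  intro i hi hai
  set W := PayA RA RD a d with hW
  have hsum0 : ∑ m ∈ Finset.range (RA + 1), a m * (W - Uu RA RD d m) = 0 := by
    rw [Finset.sum_congr rfl (g := fun m => a m * W - a m * Uu RA RD d m)
      (fun m _ => by ring), Finset.sum_sub_distrib, ← Finset.sum_mul, hN.1.2.2,
      ← nash_payA_eq hN]
    ring
  have hnn : ∀ m ∈ Finset.range (RA + 1), 0 ≤ a m * (W - Uu RA RD d m) := by
    intro m hm
    have hm' := Finset.mem_range.1 hm
    exact mul_nonneg (hN.1.1 m) (by linarith [nash_U_le hN m (by omega)])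
  have hz := (Finset.sum_eq_zero_iff_of_nonneg hnn).1 hsum0 i
    (Finset.mem_range.2 (by omega))
  have := mul_eq_zero.1 hz
  rcases this with h | h
  · exact absurd h hai
  · linarith

lemma nash_V_le (hN : IsNash RA RD a d) : ∀ j ≤ RD, Vv RD a j ≤ PayD RA RD a d := by
  intro j hj
  have := hN.2.2.2 (delta j) (delta_mixed hj)
  rwa [payD_decomp RA RD a (delta j) hN.1, sum_delta_mul RD j hj] at this

lemma nash_payD_eq (hN : IsNash RA RD a d) :
    PayD RA RD a d = ∑ j ∈ Finset.range (RD + 1), d j * Vv RD a j :=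
  payD_decomp RA RD a d hN.1

lemma nash_V_supp (hN : IsNash RA RD a d) :
    ∀ j ≤ RD, d j ≠ 0 → Vv RD a j = PayD RA RD a d := by
  intro j hj hdj
  set W := PayD RA RD a d with hW
  have hsum0 : ∑ m ∈ Finset.range (RD + 1), d m * (W - Vv RD a m) = 0 := by
    rw [Finset.sum_congr rfl (g := fun m => d m * W - d m * Vv RD a m)
      (fun m _ => by ring), Finset.sum_sub_distrib, ← Finset.sum_mul, hN.2.1.2.2,
      ← nash_payD_eq hN]
    ring
  have hnn : ∀ m ∈ Finset.range (RD + 1), 0 ≤ d m * (W - Vv RD a m) := by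
    intro m hm
    have hm' := Finset.mem_range.1 hm
    exact mul_nonneg (hN.2.1.1 m) (by linarith [nash_V_le hN m (by omega)])
  have hz := (Finset.sum_eq_zero_iff_of_nonneg hnn).1 hsum0 j
    (Finset.mem_range.2 (by omega))
  rcases mul_eq_zero.1 hz with h | h
  · exact absurd h hdj
  · linarith

end NashFacts
section Star
variable {R l : ℕ}

lemma cast_ge_one {j : ℕ} (h : j < R) : (1:ℝ) ≤ (R:ℝ) - j := by
  have : (j:ℝ) + 1 ≤ R := by exact_mod_cast h
  linarith

lemma dstar_nonneg (h2 : l + 1 ≤ R)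
    (hlt : ∑ j ∈ Finset.range l, (1:ℝ) / ((R:ℝ) - j) ≤ 1) :
    ∀ j, 0 ≤ dstar R l j := by
  intro j
  unfold dstar
  split
  · rename_i h
    have := cast_ge_one (R := R) (j := j) (by omega)
    exact div_nonneg zero_le_one (by linarith)
  · split
    · linarith
    · exact le_rfl

lemma dstar_eq_zero {j : ℕ} (h : l < j) : dstar R l j = 0 := by
  unfold dstar
  rw [if_neg (by omega), if_neg (by omega)]

lemma dstar_sum (N : ℕ) (hN : l ≤ N) :
    ∑ j ∈ Finset.range (N + 1), dstar R l j = 1 := by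
  have h1 : ∑ j ∈ Finset.range (N + 1), dstar R l j
      = ∑ j ∈ Finset.range (l + 1), dstar R l j := by
    symm
    apply Finset.sum_subset (Finset.range_subset_range.2 (by omega))
    intro x _ hx
    exact dstar_eq_zero (by simp only [Finset.mem_range, not_lt] at hx; omega)
  rw [h1, Finset.sum_range_succ]
  have h2 : ∑ j ∈ Finset.range l, dstar R l j
      = ∑ j ∈ Finset.range l, 1 / ((R:ℝ) - j) := by
    apply Finset.sum_congr rfl
    intro j hj
    unfold dstar
    rw [if_pos (Finset.mem_range.1 hj)]
  rw [h2]
  unfold dstar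
  rw [if_neg (by omega), if_pos rfl]
  ring

lemma Cc_dstar (h2 : l + 1 ≤ R) : ∀ m, m ≤ l → Cc R (dstar R l) m = m := by
  intro m
  induction m with
  | zero => intro _; simp [Cc]
  | succ n ih =>
    intro h
    unfold Cc at *
    rw [Finset.sum_range_succ, ih (by omega)]
    have hd : dstar R l n = 1 / ((R:ℝ) - n) := by
      unfold dstar; rw [if_pos (by omega)]
    rw [hd]
    have h1 : (1:ℝ) ≤ (R:ℝ) - n := cast_ge_one (by omega)
    have h0 : ((R:ℝ) - n) ≠ 0 := by linarith
    push_cast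
    field_simp

lemma Cc_dstar_top (h2 : l + 1 ≤ R) (m : ℕ) (hm : l < m) :
    Cc R (dstar R l) m
      = l + (1 - ∑ j ∈ Finset.range l, (1:ℝ) / ((R:ℝ) - j)) * ((R:ℝ) - l) := by
  have h1 : Cc R (dstar R l) m = Cc R (dstar R l) (l + 1) := by
    unfold Cc
    symm
    apply Finset.sum_subset (Finset.range_subset_range.2 (by omega))
    intro x _ hx
    rw [dstar_eq_zero (by simp only [Finset.mem_range, not_lt] at hx; omega)]
    ring
  rw [h1]
  unfold Cc
  rw [Finset.sum_range_succ]
  have := Cc_dstar (l := l) h2 l le_rfl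
  unfold Cc at this
  rw [this]
  unfold dstar
  rw [if_neg (by omega), if_pos rfl]

lemma astar_nonneg (h2 : l + 1 ≤ R) : ∀ i, 0 ≤ astar R l i := by
  intro i
  have hRl : (0:ℝ) ≤ (R:ℝ) - l := by linarith [cast_ge_one (R := R) (j := l) (by omega)]
  unfold astar
  split
  · positivity
  · split
    · rename_i h1 h2'
      have hi : (1:ℝ) ≤ (R:ℝ) - i := cast_ge_one (by omega)
      have : (0:ℝ) < ((R:ℝ) - i + 1) * ((R:ℝ) - i) := by nlinarith
      positivity
    · exact le_rfl

lemma astar_eq_zero {i : ℕ} (h1 : 1 ≤ l) (h : l < i) : astar R l i = 0 := by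
  unfold astar
  rw [if_neg (by omega), if_neg (by omega)]

lemma Aa_astar (h1 : 1 ≤ l) (h2 : l + 1 ≤ R) :
    ∀ j, j ≤ l → Aa (astar R l) j = ((R:ℝ) - l) / ((R:ℝ) - j) := by
  intro j
  induction j with
  | zero =>
    intro _
    unfold Aa astar
    simp
  | succ n ih =>
    intro h
    unfold Aa at *
    rw [Finset.sum_range_succ, ih (by omega)]
    have ha : astar R l (n+1) = ((R:ℝ) - l) / (((R:ℝ) - (n+1) + 1) * ((R:ℝ) - (n+1))) := by
      unfold astar
      rw [if_neg (by omega), if_pos (by omega)]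
      push_cast
      ring
    rw [ha]
    have e1 : (1:ℝ) ≤ (R:ℝ) - (n+1) := by
      have := cast_ge_one (R := R) (j := n+1) (by omega)
      push_cast at this ⊢
      linarith
    have e2 : ((R:ℝ) - (n+1) + 1) = (R:ℝ) - n := by push_cast; ring
    rw [e2]
    have e3 : (0:ℝ) < (R:ℝ) - n := by linarith
    have e4 : (0:ℝ) < (R:ℝ) - (n+1) := by linarith
    push_cast
    field_simp
    push_cast
    ring

lemma Aa_astar_top (h1 : 1 ≤ l) (h2 : l + 1 ≤ R) :
    ∀ j, l ≤ j → Aa (astar R l) j = 1 := by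
  intro j hj
  have hA : Aa (astar R l) j = Aa (astar R l) l := by
    unfold Aa
    symm
    apply Finset.sum_subset (Finset.range_subset_range.2 (by omega))
    intro x _ hx
    exact astar_eq_zero h1 (by simp only [Finset.mem_range, not_lt] at hx; omega)
  rw [hA, Aa_astar h1 h2 l le_rfl]
  have : (1:ℝ) ≤ (R:ℝ) - l := cast_ge_one (by omega)
  field_simp

lemma astar_mixed (N : ℕ) (h1 : 1 ≤ l) (h2 : l + 1 ≤ R) (hN : l ≤ N) :
    IsMixed N (astar R l) := by
  refine ⟨astar_nonneg h2, fun i hi => astar_eq_zero h1 (by omega), ?_⟩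
  have := Aa_astar_top h1 h2 N hN
  unfold Aa at this
  exact this

lemma dstar_mixed (N : ℕ) (h2 : l + 1 ≤ R) (hN : l ≤ N)
    (hlt : ∑ j ∈ Finset.range l, (1:ℝ) / ((R:ℝ) - j) ≤ 1) :
    IsMixed N (dstar R l) := by
  exact ⟨dstar_nonneg h2 hlt, fun j hj => dstar_eq_zero (by omega), dstar_sum N hN⟩

end Star
section Exist
variable {RA RD k : ℕ}

lemma upper_facts (hA : 2 ≤ RA) (hD : 2 ≤ RD) (hk : IsUpperBound RD k) :
    1 ≤ min RA k ∧ min RA k + 1 ≤ RD ∧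
    (∑ j ∈ Finset.range (min RA k), (1:ℝ) / ((RD:ℝ) - j) < 1) := by
  obtain ⟨hk1, hk2, hk3, hk4⟩ := hk
  have hl1 : 1 ≤ min RA k := by omega
  have hl2 : min RA k + 1 ≤ RD := by omega
  refine ⟨hl1, hl2, ?_⟩
  rw [hsum RD (min RA k) (by omega)]
  have hmono : H (RD - k) ≤ H (RD - min RA k) := H_mono (by omega)
  linarith

/-- sum over range (k+1) exceeds 1 (strictly) -/
lemma upper_gt (hD : 2 ≤ RD) (hk : IsUpperBound RD k) :
    1 < ∑ j ∈ Finset.range (k + 1), (1:ℝ) / ((RD:ℝ) - j) := by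
  obtain ⟨hk1, hk2, hk3, hk4⟩ := hk
  rw [hsum RD (k+1) (by omega)]
  have : RD - (k+1) = RD - k - 1 := by omega
  rw [this]
  exact hk4

lemma exist_U_le (hA : 2 ≤ RA) (hD : 2 ≤ RD) (hk : IsUpperBound RD k) :
    ∀ i ≤ RA, Uu RA RD (dstar RD (min RA k)) i ≤ RA := by
  obtain ⟨hl1, hl2, hlt⟩ := upper_facts hA hD hk
  set l := min RA k with hl
  intro i hi
  unfold Uu
  rcases le_or_gt i l with h | h
  · rw [Cc_dstar hl2 i h]; linarith
  · -- l < i ≤ RA, hence l = k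
    have hlk : l = k := by omega
    rw [Cc_dstar_top hl2 i h]
    have hgt := upper_gt hD hk
    rw [Finset.sum_range_succ, ← hlk] at hgt
    have hRl : (1:ℝ) ≤ (RD:ℝ) - l := cast_ge_one (by omega)
    have hRl0 : ((RD:ℝ) - l) ≠ 0 := by linarith
    have hcl : (1 - ∑ j ∈ Finset.range l, (1:ℝ) / ((RD:ℝ) - j)) * ((RD:ℝ) - l) ≤ 1 := by
      have h5 : 1 - ∑ j ∈ Finset.range l, (1:ℝ) / ((RD:ℝ) - j) < 1 / ((RD:ℝ) - l) := by
        linarith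
      calc (1 - ∑ j ∈ Finset.range l, (1:ℝ) / ((RD:ℝ) - j)) * ((RD:ℝ) - l)
          ≤ (1 / ((RD:ℝ) - l)) * ((RD:ℝ) - l) := by nlinarith
        _ = 1 := by field_simp
    have hil : (l:ℝ) + 1 ≤ (i:ℝ) := by exact_mod_cast h
    linarith

lemma exist_U_eq (hA : 2 ≤ RA) (hD : 2 ≤ RD) (hk : IsUpperBound RD k) :
    ∀ i ≤ min RA k, Uu RA RD (dstar RD (min RA k)) i = RA := by
  obtain ⟨hl1, hl2, hlt⟩ := upper_facts hA hD hk
  intro i hi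
  unfold Uu
  rw [Cc_dstar hl2 i hi]
  ring

lemma exist_V_le (hA : 2 ≤ RA) (hD : 2 ≤ RD) (hk : IsUpperBound RD k) :
    ∀ j ≤ RD, Vv RD (astar RD (min RA k)) j ≤ (RD:ℝ) - (min RA k) := by
  obtain ⟨hl1, hl2, hlt⟩ := upper_facts hA hD hk
  set l := min RA k with hl
  intro j hj
  unfold Vv
  rcases le_or_gt j l with h | h
  · rw [Aa_astar hl1 hl2 j h]
    have h1 : (1:ℝ) ≤ (RD:ℝ) - j := cast_ge_one (by omega)
    have h0 : ((RD:ℝ) - j) ≠ 0 := by linarith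
    field_simp
    exact le_rfl
  · rw [Aa_astar_top hl1 hl2 j (by omega), mul_one]
    have : (l:ℝ) ≤ (j:ℝ) := by exact_mod_cast (by omega : l ≤ j)
    linarith

lemma exist_V_eq (hA : 2 ≤ RA) (hD : 2 ≤ RD) (hk : IsUpperBound RD k) :
    ∀ j ≤ min RA k, Vv RD (astar RD (min RA k)) j = (RD:ℝ) - (min RA k) := by
  obtain ⟨hl1, hl2, hlt⟩ := upper_facts hA hD hk
  intro j hj
  unfold Vv
  rw [Aa_astar hl1 hl2 j hj]
  have h1 : (1:ℝ) ≤ (RD:ℝ) - j := cast_ge_one (by omega)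
  have h0 : ((RD:ℝ) - j) ≠ 0 := by linarith
  field_simp

theorem exist_nash (hA : 2 ≤ RA) (hD : 2 ≤ RD) (hk : IsUpperBound RD k) :
    IsNash RA RD (astar RD (min RA k)) (dstar RD (min RA k)) := by
  obtain ⟨hl1, hl2, hlt⟩ := upper_facts hA hD hk
  set l := min RA k with hl
  have hamix : IsMixed RA (astar RD l) := astar_mixed RA hl1 hl2 (by omega)
  have hdmix : IsMixed RD (dstar RD l) := dstar_mixed RD hl2 (by omega) hlt.le
  have hApay : PayA RA RD (astar RD l) (dstar RD l) = RA := by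
    rw [payA_decomp RA RD _ _ hdmix]
    have : ∀ i ∈ Finset.range (RA + 1),
        astar RD l i * Uu RA RD (dstar RD l) i = astar RD l i * RA := by
      intro i hi
      rcases le_or_gt i l with h | h
      · rw [exist_U_eq hA hD hk i h]
      · rw [astar_eq_zero hl1 h]; ring
    rw [Finset.sum_congr rfl this, ← Finset.sum_mul, hamix.2.2, one_mul]
  have hDpay : PayD RA RD (astar RD l) (dstar RD l) = (RD:ℝ) - l := by
    rw [payD_decomp RA RD _ _ hamix]
    have : ∀ j ∈ Finset.range (RD + 1),
        dstar RD l j * Vv RD (astar RD l) j = dstar RD l j * ((RD:ℝ) - l) := by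
      intro j hj
      rcases le_or_gt j l with h | h
      · rw [exist_V_eq hA hD hk j h]
      · rw [dstar_eq_zero h]; ring
    rw [Finset.sum_congr rfl this, ← Finset.sum_mul, hdmix.2.2, one_mul]
  refine ⟨hamix, hdmix, ?_, ?_⟩
  · intro a' ha'
    rw [hApay, payA_decomp RA RD a' _ hdmix]
    calc ∑ i ∈ Finset.range (RA + 1), a' i * Uu RA RD (dstar RD l) i
        ≤ ∑ i ∈ Finset.range (RA + 1), a' i * RA := by
          apply Finset.sum_le_sum
          intro i hi
          exact mul_le_mul_of_nonneg_left
            (exist_U_le hA hD hk i (Nat.lt_succ_iff.1 (Finset.mem_range.1 hi))) (ha'.1 i)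
      _ = RA := by rw [← Finset.sum_mul, ha'.2.2, one_mul]
  · intro d' hd'
    rw [hDpay, payD_decomp RA RD _ d' hamix]
    calc ∑ j ∈ Finset.range (RD + 1), d' j * Vv RD (astar RD l) j
        ≤ ∑ j ∈ Finset.range (RD + 1), d' j * ((RD:ℝ) - l) := by
          apply Finset.sum_le_sum
          intro j hj
          exact mul_le_mul_of_nonneg_left
            (exist_V_le hA hD hk j (Nat.lt_succ_iff.1 (Finset.mem_range.1 hj))) (hd'.1 j)
      _ = (RD:ℝ) - l := by rw [← Finset.sum_mul, hd'.2.2, one_mul]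

end Exist
set_option maxHeartbeats 2000000 in
theorem uniq_nash (RA RD k : ℕ) (hA : 2 ≤ RA) (hD : 2 ≤ RD) (hk : IsUpperBound RD k)
    (a d : ℕ → ℝ) (hN : IsNash RA RD a d) :
    a = astar RD (min RA k) ∧ d = dstar RD (min RA k) := by
  obtain ⟨ha, hd, hBRa, hBRd⟩ := hN
  have hN : IsNash RA RD a d := ⟨ha, hd, hBRa, hBRd⟩
  set W := PayA RA RD a d with hWdef
  set V0 := PayD RA RD a d with hV0def
  have hU := nash_U_le hN
  have hUs := nash_U_supp hN
  have hV := nash_V_le hN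
  have hVs := nash_V_supp hN
  -- basic cumulative facts
  have hcnn : ∀ j, 0 ≤ d j * ((RD:ℝ) - j) := by
    intro j
    rcases le_or_gt j RD with h | h
    · have : (j:ℝ) ≤ RD := by exact_mod_cast h
      exact mul_nonneg (hd.1 j) (by linarith)
    · rw [hd.2.1 j h]; ring_nf; rfl
  have hCmono : ∀ m n, m ≤ n → Cc RD d m ≤ Cc RD d n := by
    intro m n h
    unfold Cc
    apply Finset.sum_le_sum_of_subset_of_nonneg (Finset.range_subset_range.2 h)
    intro j _ _; exact hcnn j
  have hCle : ∀ m, Cc RD d m ≤ RD := by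
    intro m
    unfold Cc
    calc ∑ j ∈ Finset.range m, d j * ((RD:ℝ) - j)
        ≤ ∑ j ∈ Finset.range m, d j * (RD:ℝ) := by
          apply Finset.sum_le_sum
          intro j _
          rcases le_or_gt j RD with h | h
          · exact mul_le_mul_of_nonneg_left (by simp [Nat.cast_nonneg]) (hd.1 j)
          · rw [hd.2.1 j h]; ring_nf; rfl
      _ = (∑ j ∈ Finset.range m, d j) * RD := by rw [Finset.sum_mul]
      _ ≤ 1 * RD := by
          apply mul_le_mul_of_nonneg_right (mixed_partial_le hd m) (Nat.cast_nonneg RD)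
      _ = RD := one_mul _
  have hCstop : ∀ m n, m ≤ n → (∀ x, m ≤ x → x < n → d x = 0) →
      Cc RD d n = Cc RD d m := by
    intro m n h hz
    unfold Cc
    symm
    apply Finset.sum_subset (Finset.range_subset_range.2 h)
    intro x hx hx'
    simp only [Finset.mem_range, not_lt] at hx hx'
    rw [hz x hx' (by omega)]; ring
  have hU0 : Uu RA RD d 0 = RA := by unfold Uu Cc; simp
  have hWRA : (RA:ℝ) ≤ W := hU0 ▸ hU 0 (by omega)
  have hAnn : ∀ j, 0 ≤ Aa a j := fun j => mixed_partial_nonneg ha (j+1)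
  have hAstop : ∀ m n, m ≤ n → (∀ x, m < x → x ≤ n → a x = 0) → Aa a n = Aa a m := by
    intro m n h hz
    unfold Aa
    symm
    apply Finset.sum_subset (Finset.range_subset_range.2 (by omega))
    intro x hx hx'
    simp only [Finset.mem_range, not_lt] at hx hx'
    exact hz x (by omega) (by omega)
  -- attacker never spends more than RD
  have hsuppRD : ∀ i, RD < i → a i = 0 := by
    intro i hi
    rcases le_or_gt i RA with hiRA | hiRA
    · by_contra hai
      have h1 := hUs i hiRA hai
      unfold Uu at h1
      have h2 : (i:ℝ) ≤ Cc RD d i := by linarith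
      have h3 := hCle i
      have : (RD:ℝ) < i := by exact_mod_cast hi
      linarith
    · exact ha.2.1 i hiRA
  -- defender's equilibrium payoff is positive
  have hV0pos : 0 < V0 := by
    by_contra hcon
    push_neg at hcon
    have hA0 : ∀ j, j < RD → Aa a j = 0 := by
      intro j hj
      have h1 := hV j (by omega)
      unfold Vv at h1
      have h2 : (j:ℝ) + 1 ≤ RD := by exact_mod_cast hj
      have h3 := hAnn j
      nlinarith
    have ha0 : ∀ i, i < RD → a i = 0 := by
      intro i hi
      have h1 : Aa a (RD - 1) = 0 := hA0 (RD - 1) (by omega)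
      unfold Aa at h1
      have h2 := (Finset.sum_eq_zero_iff_of_nonneg (fun x _ => ha.1 x)).1 h1 i
        (Finset.mem_range.2 (by omega))
      exact h2
    rcases lt_or_ge RA RD with hAD | hAD
    · have : (1:ℝ) = 0 := by
        rw [← ha.2.2]
        apply Finset.sum_eq_zero
        intro i hi
        exact ha0 i (by have := Finset.mem_range.1 hi; omega)
      norm_num at this
    · have haRD : a RD = 1 := by
        have h1 : ∑ i ∈ Finset.range (RA+1), a i = a RD := by
          apply Finset.sum_eq_single_of_mem RD (Finset.mem_range.2 (by omega))
          intro b _ hb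
          rcases lt_or_ge b RD with h | h
          · exact ha0 b h
          · exact hsuppRD b (by omega)
        rw [← h1, ha.2.2]
      have hURD := hUs RD hAD (by rw [haRD]; norm_num)
      unfold Uu at hURD
      have hCge : (RD:ℝ) ≤ Cc RD d RD := by linarith
      have hCsplit : Cc RD d RD
          = (∑ j ∈ Finset.range RD, d j) * RD - ∑ j ∈ Finset.range RD, d j * j := by
        unfold Cc
        rw [Finset.sum_mul, ← Finset.sum_sub_distrib]
        apply Finset.sum_congr rfl
        intro j _; ring
      have hs1 : ∑ j ∈ Finset.range RD, d j ≤ 1 := mixed_partial_le hd RD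
      have ht0 : 0 ≤ ∑ j ∈ Finset.range RD, d j * j :=
        Finset.sum_nonneg fun j _ => mul_nonneg (hd.1 j) (Nat.cast_nonneg j)
      have hRDpos : (0:ℝ) < RD := by exact_mod_cast (by omega : 0 < RD)
      have hseq : ∑ j ∈ Finset.range RD, d j = 1 := by nlinarith
      have hteq : ∑ j ∈ Finset.range RD, d j * j = 0 := by nlinarith
      have hd0 : d 0 = 1 := by
        have h1 : ∀ j, 1 ≤ j → j < RD → d j = 0 := by
          intro j h1j h2j
          have := (Finset.sum_eq_zero_iff_of_nonneg
            (fun x _ => mul_nonneg (hd.1 x) (Nat.cast_nonneg x))).1 hteq j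
            (Finset.mem_range.2 h2j)
          have hj : (0:ℝ) < j := by exact_mod_cast h1j
          rcases mul_eq_zero.1 this with h | h
          · exact h
          · exact absurd h (by positivity)
        have h2 : ∑ j ∈ Finset.range RD, d j = d 0 := by
          apply Finset.sum_eq_single_of_mem 0 (Finset.mem_range.2 (by omega))
          intro b _ hb
          exact h1 b (by omega) (by have : b ∈ Finset.range RD := by assumption
                                    exact Finset.mem_range.1 this)
        rw [h2] at hseq; exact hseq
      have hC1 : Cc RD d 1 = RD := by
        unfold Cc
        rw [Finset.sum_range_one, hd0]
        simp
      have hU1 := hU 1 (by omega)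
      unfold Uu at hU1
      rw [hC1] at hU1
      have h2RD : (2:ℝ) ≤ RD := by exact_mod_cast hD
      have hCval : Cc RD d RD = RD := by rw [hCsplit, hseq, hteq]; ring
      rw [hCval] at hURD
      simp only [Nat.cast_one] at hU1
      linarith
  -- defender never spends everything
  have hdRD : d RD = 0 := by
    by_contra hdj
    have h1 := hVs RD le_rfl hdj
    unfold Vv at h1
    simp only [sub_self] at h1
    rw [zero_mul] at h1
    linarith
  -- the top of the defender's support
  have hFne : ((Finset.range (RD+1)).filter (fun j => d j ≠ 0)).Nonempty := by
    by_contra hcon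
    rw [Finset.not_nonempty_iff_eq_empty, Finset.filter_eq_empty_iff] at hcon
    have : (1:ℝ) = 0 := by
      rw [← hd.2.2]
      apply Finset.sum_eq_zero
      intro j hj
      have := hcon hj
      push_neg at this
      exact this
    norm_num at this
  set L := ((Finset.range (RD+1)).filter (fun j => d j ≠ 0)).max' hFne with hLdef
  have hLmem := Finset.max'_mem _ hFne
  rw [Finset.mem_filter, Finset.mem_range] at hLmem
  have hdL : d L ≠ 0 := hLmem.2
  have hLRD : L ≤ RD := by omega
  have hdgtL : ∀ j, L < j → d j = 0 := by
    intro j hj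
    by_contra hdj
    rcases le_or_gt j RD with h | h
    · have : j ≤ L := Finset.le_max' _ j
        (Finset.mem_filter.2 ⟨Finset.mem_range.2 (by omega), hdj⟩)
      omega
    · exact hdj (hd.2.1 j h)
  have hLltRD : L < RD := by
    rcases Nat.lt_or_ge L RD with h | h
    · exact h
    · exfalso; exact hdL (by have : L = RD := by omega
                             rw [this]; exact hdRD)
  -- d 0 ≠ 0
  have hd0 : d 0 ≠ 0 := by
    -- first: not both a 0 = 0 and d 0 = 0
    have hnot : ¬ (a 0 = 0 ∧ d 0 = 0) := by
      rintro ⟨ha0, hd0⟩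
      have key : ∀ n, a n = 0 ∧ d n = 0 := by
        intro n
        induction n using Nat.strong_induction_on with
        | _ n ih =>
          rcases Nat.eq_zero_or_pos n with rfl | hn
          · exact ⟨ha0, hd0⟩
          · have hC : Cc RD d n = 0 := by
              unfold Cc
              apply Finset.sum_eq_zero
              intro j hj
              rw [(ih j (Finset.mem_range.1 hj)).2]; ring
            have han : a n = 0 := by
              rcases le_or_gt n RA with h | h
              · by_contra han
                have h1 := hUs n h han
                unfold Uu at h1
                rw [hC] at h1
                have : (1:ℝ) ≤ n := by exact_mod_cast hn
                linarith
              · exact ha.2.1 n h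
            have hAn : Aa a n = 0 := by
              unfold Aa
              apply Finset.sum_eq_zero
              intro i hi
              have := Finset.mem_range.1 hi
              rcases Nat.lt_or_ge i n with h | h
              · exact (ih i h).1
              · have : i = n := by omega
                rw [this]; exact han
            have hdn : d n = 0 := by
              rcases le_or_gt n RD with h | h
              · by_contra hdn
                have h1 := hVs n h hdn
                unfold Vv at h1
                rw [hAn, mul_zero] at h1
                linarith
              · exact hd.2.1 n h
            exact ⟨han, hdn⟩
      have : (1:ℝ) = 0 := by
        rw [← ha.2.2]
        apply Finset.sum_eq_zero
        intro i _
        exact (key i).1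
      norm_num at this
    -- now suppose d 0 = 0; then a 0 ≠ 0 and W = RA
    by_contra hd0
    have ha0 : a 0 ≠ 0 := fun h => hnot ⟨h, hd0⟩
    have hWeq : PayA RA RD a d = (RA:ℝ) := by
      rw [← hUs 0 (by omega) ha0]; exact hU0
    set m := ((Finset.range (RD+1)).filter (fun j => d j ≠ 0)).min' hFne with hmdef
    have hmmem := Finset.min'_mem _ hFne
    rw [Finset.mem_filter, Finset.mem_range] at hmmem
    have hdm : d m ≠ 0 := hmmem.2
    have hm1 : 1 ≤ m := by
      rcases Nat.eq_zero_or_pos m with h | h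
      · exfalso; apply hdm; rw [h]; exact hd0
      · exact h
    have hdlt : ∀ j, j < m → d j = 0 := by
      intro j hj
      by_contra hdj
      have : m ≤ j := Finset.min'_le _ j
        (Finset.mem_filter.2 ⟨Finset.mem_range.2 (by omega), hdj⟩)
      omega
    have hmRD : m < RD := by
      rcases Nat.lt_or_ge m RD with h | h
      · exact h
      · exfalso
        have : m = RD := by omega
        exact hdm (this ▸ hdRD)
    have hain : ∀ i, 1 ≤ i → i ≤ m → a i = 0 := by
      intro i h1i h2i
      rcases le_or_gt i RA with h | h
      · by_contra hai
        have h1 := hUs i h hai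
        unfold Uu at h1
        have hC : Cc RD d i = 0 := by
          unfold Cc
          apply Finset.sum_eq_zero
          intro j hj
          rw [hdlt j (by have := Finset.mem_range.1 hj; omega)]; ring
        rw [hC, hWeq] at h1
        have : (1:ℝ) ≤ i := by exact_mod_cast h1i
        linarith
      · exact ha.2.1 i h
    obtain ⟨p, hp⟩ : ∃ p, m = p + 1 := ⟨m - 1, by omega⟩
    have hAm : Aa a m = Aa a 0 := hAstop 0 m (by omega)
      (fun x hx hx' => hain x (by omega) hx')
    have hAp : Aa a p = Aa a 0 := hAstop 0 p (by omega)
      (fun x hx hx' => hain x (by omega) (by omega))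
    have hVm := hVs m (by omega) hdm
    unfold Vv at hVm
    have hVp := hV p (by omega)
    unfold Vv at hVp
    rw [hAm] at hVm
    rw [hAp] at hVp
    have hcast : (m:ℝ) + 1 ≤ RD := by exact_mod_cast hmRD
    have hpc : (p:ℝ) = (m:ℝ) - 1 := by
      have : (m:ℝ) = (p:ℝ) + 1 := by exact_mod_cast hp
      linarith
    have hApos : 0 < Aa a 0 := by nlinarith [hAnn 0]
    rw [hpc] at hVp
    nlinarith
  -- attacker equilibrium payoff is RA
  have hA00 : Aa a 0 = a 0 := by
    show ∑ i ∈ Finset.range (0+1), a i = a 0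
    rw [Finset.sum_range_one]
  have hV00 := hVs 0 (by omega) hd0
  unfold Vv at hV00
  rw [hA00] at hV00
  push_cast at hV00
  have ha0pos : 0 < a 0 := by
    have hRDpos : (0:ℝ) < RD := by exact_mod_cast (by omega : 0 < RD)
    nlinarith
  have hWeq : PayA RA RD a d = (RA:ℝ) := by
    rw [← hUs 0 (by omega) (by linarith), hU0]
  -- defender's support is the interval [0, L]
  have hdint : ∀ j, j ≤ L → d j ≠ 0 := by
    intro j
    induction j using Nat.strong_induction_on with
    | _ j ih =>
      intro hjL
      rcases Nat.eq_zero_or_pos j with rfl | hj1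
      · exact hd0
      · by_contra hdj
        have hjL' : j < L := by
          have hne : j ≠ L := fun h => hdL (h ▸ hdj)
          omega
        have hF'ne : ((Finset.range (RD+1)).filter (fun x => j ≤ x ∧ d x ≠ 0)).Nonempty :=
          ⟨L, Finset.mem_filter.2 ⟨Finset.mem_range.2 (by omega), by omega, hdL⟩⟩
        set n := ((Finset.range (RD+1)).filter (fun x => j ≤ x ∧ d x ≠ 0)).min' hF'ne
          with hndef
        have hnmem := Finset.min'_mem _ hF'ne
        rw [Finset.mem_filter, Finset.mem_range] at hnmem
        have hdn : d n ≠ 0 := hnmem.2.2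
        have hjn : j < n := by
          have hne : j ≠ n := fun h => hdn (h ▸ hdj)
          have := hnmem.2.1
          omega
        have hnRD : n < RD := by
          have hne : n ≠ RD := fun h => hdn (h ▸ hdRD)
          omega
        have hdz : ∀ x, j ≤ x → x < n → d x = 0 := by
          intro x h1x h2x
          by_contra hdx
          have : n ≤ x := Finset.min'_le _ x
            (Finset.mem_filter.2 ⟨Finset.mem_range.2 (by omega), h1x, hdx⟩)
          omega
        clear_value n
        have haz : ∀ i, j < i → i ≤ n → a i = 0 := by
          intro i h1i h2i
          rcases le_or_gt i RA with h | h
          · by_contra hai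
            have h1 := hUs i h hai
            have h2 := hU j (by omega)
            unfold Uu at h1 h2
            have hCC : Cc RD d i = Cc RD d j := hCstop j i (by omega)
              (fun x hx hx' => hdz x hx (by omega))
            rw [hCC] at h1
            have : (j:ℝ) < i := by exact_mod_cast h1i
            linarith
          · exact ha.2.1 i h
        have hAn : Aa a n = Aa a j := hAstop j n (Nat.le_of_lt hjn) haz
        have hVn := hVs n (by omega) hdn
        unfold Vv at hVn
        have hVj := hV j (by omega)
        unfold Vv at hVj
        rw [hAn] at hVn
        have hjnR : (j:ℝ) < n := by exact_mod_cast hjn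
        have hnR : (n:ℝ) + 1 ≤ RD := by exact_mod_cast hnRD
        have hAjpos : 0 < Aa a j := by nlinarith [hAnn j]
        nlinarith
  -- defender's cumulative attack mass on [0, L]
  have hAval : ∀ j, j ≤ L → Aa a j = V0 / ((RD:ℝ) - j) := by
    intro j hjL
    have h1 := hVs j (by omega) (hdint j hjL)
    unfold Vv at h1
    have h2 : (j:ℝ) + 1 ≤ RD := by exact_mod_cast (by omega : j < RD)
    rw [eq_div_iff (by linarith)]
    linarith [h1]
  -- L ≤ RA
  have hLRA : L ≤ RA := by
    by_contra hcon
    push_neg at hcon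
    have h0 := ha.2.1 (RA+1) (by omega)
    have h1 : Aa a (RA+1) = Aa a RA + a (RA+1) := by
      unfold Aa; rw [Finset.sum_range_succ]
    rw [hAval (RA+1) (by omega), hAval RA (by omega), h0] at h1
    have hc : ((RA:ℝ)+1) + 1 ≤ RD := by exact_mod_cast (by omega : RA + 1 < RD)
    have e1 : (0:ℝ) < (RD:ℝ) - (RA+1) := by push_cast; linarith
    have e2 : (0:ℝ) < (RD:ℝ) - RA := by push_cast; linarith
    have e3 : (RD:ℝ) - (RA+1) < (RD:ℝ) - RA := by push_cast; linarith
    have := div_lt_div_of_pos_left hV0pos e1 e3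
    push_cast at h1
    linarith
  -- attacker's support contains [0, L]
  have haL : ∀ i, i ≤ L → a i ≠ 0 := by
    intro i hiL
    rcases Nat.eq_zero_or_pos i with rfl | hi1
    · linarith
    · obtain ⟨p, hp⟩ : ∃ p, i = p + 1 := ⟨i - 1, by omega⟩
      have h1 : Aa a i = Aa a p + a i := by
        unfold Aa; rw [hp, Finset.sum_range_succ]
      rw [hAval i hiL, hAval p (by omega)] at h1
      have hc : (i:ℝ) + 1 ≤ RD := by exact_mod_cast (by omega : i < RD)
      have hpc : (p:ℝ) = (i:ℝ) - 1 := by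
        have : (i:ℝ) = (p:ℝ) + 1 := by exact_mod_cast hp
        linarith
      rw [hpc] at h1
      have e1 : (0:ℝ) < (RD:ℝ) - i := by linarith
      have e2 : (0:ℝ) < (RD:ℝ) - ((i:ℝ) - 1) := by linarith
      have e3 : (RD:ℝ) - i < (RD:ℝ) - ((i:ℝ)-1) := by linarith
      have := div_lt_div_of_pos_left hV0pos e1 e3
      intro hai
      rw [hai] at h1
      linarith
  -- hence Cc is the identity on [0, L]
  have hCi : ∀ i, i ≤ L → Cc RD d i = i := by
    intro i hiL
    have h1 := hUs i (by omega) (haL i hiL)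
    unfold Uu at h1
    rw [hWeq] at h1
    linarith
  -- defender's strategy on [0, L)
  have hdval : ∀ j, j < L → d j = 1 / ((RD:ℝ) - j) := by
    intro j hjL
    have h1 := hCi (j+1) (by omega)
    have h2 := hCi j (by omega)
    unfold Cc at h1 h2
    rw [Finset.sum_range_succ, h2] at h1
    have hc : (j:ℝ) + 1 ≤ RD := by exact_mod_cast (by omega : j < RD)
    have hne : ((RD:ℝ) - j) ≠ 0 := by linarith
    rw [eq_div_iff hne]
    push_cast at h1
    linarith
  -- harmonic-sum facts
  obtain ⟨hk1, hk2, hk3, hk4⟩ := hk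
  have hkgt : 1 < ∑ j ∈ Finset.range (k + 1), (1:ℝ) / ((RD:ℝ) - j) :=
    upper_gt hD ⟨hk1, hk2, hk3, hk4⟩
  have hklt : ∑ j ∈ Finset.range k, (1:ℝ) / ((RD:ℝ) - j) < 1 := by
    rw [hsum RD k (by omega)]; exact hk3
  have hSmono : ∀ m n, m ≤ n → n ≤ RD →
      ∑ j ∈ Finset.range m, (1:ℝ) / ((RD:ℝ) - j)
        ≤ ∑ j ∈ Finset.range n, (1:ℝ) / ((RD:ℝ) - j) := by
    intro m n h1 h2
    apply Finset.sum_le_sum_of_subset_of_nonneg (Finset.range_subset_range.2 h1)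
    intro j hj _
    have := cast_ge_one (R := RD) (j := j) (by have := Finset.mem_range.1 hj; omega)
    positivity
  -- the value of d L
  have hdsum1 : ∑ j ∈ Finset.range (L+1), d j = 1 := by
    rw [← hd.2.2]
    apply Finset.sum_subset (Finset.range_subset_range.2 (by omega))
    intro x _ hx
    exact hdgtL x (by simp only [Finset.mem_range, not_lt] at hx; omega)
  have hdrangeL : ∑ j ∈ Finset.range L, d j
      = ∑ j ∈ Finset.range L, (1:ℝ) / ((RD:ℝ) - j) :=
    Finset.sum_congr rfl (fun j hj => hdval j (Finset.mem_range.1 hj))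
  have hdLval : d L = 1 - ∑ j ∈ Finset.range L, (1:ℝ) / ((RD:ℝ) - j) := by
    rw [← hdrangeL]
    have := hdsum1
    rw [Finset.sum_range_succ] at this
    linarith
  have hdLpos : 0 < d L := lt_of_le_of_ne (hd.1 L) (Ne.symm hdL)
  have hSLlt : ∑ j ∈ Finset.range L, (1:ℝ) / ((RD:ℝ) - j) < 1 := by
    rw [hdLval] at hdLpos; linarith
  have hLk : L ≤ k := by
    by_contra hcon
    push_neg at hcon
    have h1 := hSmono (k+1) L (by omega) (by omega)
    linarith
  -- Cc at L + 1
  have hCL1 : Cc RD d (L+1) = (L:ℝ) + d L * ((RD:ℝ) - L) := by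
    unfold Cc
    rw [Finset.sum_range_succ]
    have := hCi L le_rfl
    unfold Cc at this
    rw [this]
  have hRDL1 : (1:ℝ) ≤ (RD:ℝ) - L := cast_ge_one hLltRD
  -- no attacker mass above L
  have hahigh : ∀ i, L < i → a i = 0 := by
    intro i hi
    rcases le_or_gt i RA with hiRA | hiRA
    · by_contra hai
      have h1 := hUs i hiRA hai
      unfold Uu at h1
      rw [hWeq] at h1
      have hCCi : Cc RD d i = Cc RD d (L+1) := hCstop (L+1) i (by omega)
        (fun x hx hx' => hdgtL x (by omega))
      rw [hCCi, hCL1] at h1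
      have hiL1 : (L:ℝ) + 1 ≤ i := by exact_mod_cast hi
      have hcLge : 1 ≤ d L * ((RD:ℝ) - L) := by linarith
      have h2 := hU (L+1) (by omega)
      unfold Uu at h2
      rw [hWeq, hCL1] at h2
      have hc1 : ((L:ℕ):ℝ) + 1 = (((L+1:ℕ)):ℝ) := by push_cast; ring
      have hcLle : d L * ((RD:ℝ) - L) ≤ 1 := by push_cast at h2; linarith
      have hcLeq : d L * ((RD:ℝ) - L) = 1 := le_antisymm hcLle hcLge
      have hSL1 : ∑ j ∈ Finset.range (L+1), (1:ℝ) / ((RD:ℝ) - j) = 1 := by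
        rw [Finset.sum_range_succ]
        have hdLv : d L = 1 / ((RD:ℝ) - L) := by
          rw [eq_div_iff (by linarith)]
          exact hcLeq
        rw [hdLv] at hdLval
        linarith
      rcases lt_or_eq_of_le hLk with h | h
      · have := hSmono (L+1) k (by omega) (by omega)
        linarith
      · rw [h] at hSL1
        linarith
    · exact ha.2.1 i hiRA
  -- total attacker mass at L
  have hAL1 : Aa a L = 1 := by
    unfold Aa
    rw [← ha.2.2]
    apply Finset.sum_subset (Finset.range_subset_range.2 (by omega))
    intro x _ hx
    exact hahigh x (by simp only [Finset.mem_range, not_lt] at hx; omega)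
  have hV0val : V0 = (RD:ℝ) - L := by
    have h1 := hVs L (by omega) hdL
    unfold Vv at h1
    rw [hAL1, mul_one] at h1
    rw [hV0def, ← h1]
  -- L is exactly min RA k
  have hLmin : L = min RA k := by
    rcases Nat.lt_or_ge L (min RA k) with hcon | hge
    · exfalso
      have hLRA1 : L + 1 ≤ RA := by omega
      have hLk1 : L + 1 ≤ k := by omega
      have h2 := hU (L+1) hLRA1
      unfold Uu at h2
      rw [hWeq, hCL1] at h2
      have hcLle : d L * ((RD:ℝ) - L) ≤ 1 := by push_cast at h2; linarith
      have hdLle : d L ≤ 1 / ((RD:ℝ) - L) := by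
        rw [le_div_iff₀ (by linarith)]
        exact hcLle
      have hSL1 : 1 ≤ ∑ j ∈ Finset.range (L+1), (1:ℝ) / ((RD:ℝ) - j) := by
        rw [Finset.sum_range_succ]
        rw [hdLval] at hdLle
        linarith
      have := hSmono (L+1) k hLk1 (by omega)
      linarith
    · omega
  -- conclude
  have hL1 : 1 ≤ L := by omega
  constructor
  · funext i
    rw [← hLmin]
    rcases Nat.eq_zero_or_pos i with rfl | hi1
    · have h1 := hAval 0 (by omega)
      rw [hA00] at h1
      rw [h1, hV0val]
      unfold astar
      rw [if_pos rfl]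
      norm_num
    · rcases le_or_gt i L with hiL | hiL
      · obtain ⟨p, hp⟩ : ∃ p, i = p + 1 := ⟨i - 1, by omega⟩
        have h1 : Aa a i = Aa a p + a i := by
          unfold Aa; rw [hp, Finset.sum_range_succ]
        rw [hAval i hiL, hAval p (by omega), hV0val] at h1
        have hpc : (p:ℝ) = (i:ℝ) - 1 := by
          have : (i:ℝ) = (p:ℝ) + 1 := by exact_mod_cast hp
          linarith
        rw [hpc] at h1
        have hc : (i:ℝ) + 1 ≤ RD := by exact_mod_cast (by omega : i < RD)
        have e1 : (0:ℝ) < (RD:ℝ) - i := by linarith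
        have e2 : (0:ℝ) < (RD:ℝ) - ((i:ℝ) - 1) := by linarith
        unfold astar
        rw [if_neg (by omega), if_pos hiL]
        have e3 : (RD:ℝ) - (i:ℝ) + 1 = (RD:ℝ) - ((i:ℝ) - 1) := by ring
        rw [e3]
        rw [eq_div_iff (by positivity)]
        field_simp at h1
        nlinarith [h1]
      · rw [hahigh i hiL, astar_eq_zero hL1 hiL]
  · funext j
    rw [← hLmin]
    rcases Nat.lt_or_ge j L with hjL | hjL
    · rw [hdval j hjL]
      unfold dstar
      rw [if_pos hjL]
    · rcases Nat.eq_or_lt_of_le hjL with h | h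
      · rw [← h, hdLval]
        unfold dstar
        rw [if_neg (by omega), if_pos rfl]
      · rw [hdgtL j h, dstar_eq_zero h]
/-- The A-D game with endowments `R_A, R_D` has exactly one mixed-strategy Nash
equilibrium, namely `(astar R_D l*, dstar R_D l*)` with `l* = min (R_A, k*)`. -/
theorem unequal_endowments_unique_equilibrium (RA RD k : ℕ) (hA : 2 ≤ RA) (hD : 2 ≤ RD)
    (hk : IsUpperBound RD k) :
    IsNash RA RD (astar RD (min RA k)) (dstar RD (min RA k)) ∧
    ∀ a d : ℕ → ℝ, IsNash RA RD a d → a = astar RD (min RA k) ∧ d = dstar RD (min RA k) :=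
  ⟨exist_nash hA hD hk, fun a d hN => uniq_nash RA RD k hA hD hk a d hN⟩
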